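/- arXiv:1402.5334 — 2 statements merged into one kernel-verified Lean document; each statement's English description precedes it below -/
import Mathlib

section
/- For row vectors Z, W ∈ ℂⁿ, the 2n×2n hermitian block matrix [[(1+|W|²) I_n, Z̄ᵀ W],[W̄ᵀ Z, (1+|Z|²) I_n]] is positive definite, where |Z|² = Σ Z_a Z̄_a and Z̄ᵀ W denotes the n×n matrix with entries Z̄_a W_b. -/
open Matrix Complex ComplexOrder

/-- for row vectors `Z, W ∈ ℂⁿ`, the hermitian block matrix
`[[(1+|W|²)I, Z̄ᵀW],[W̄ᵀZ, (1+|Z|²)I]]` is positive definite. -/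
theorem blockMatrix_posDef {n : ℕ} (Z W : Fin n → ℂ) :
    (Matrix.fromBlocks
        (((1 + ∑ a, Complex.normSq (W a) : ℝ) : ℂ) • (1 : Matrix (Fin n) (Fin n) ℂ))
        (Matrix.of fun a b => (starRingEnd ℂ) (Z a) * W b)
        (Matrix.of fun a b => (starRingEnd ℂ) (W a) * Z b)
        (((1 + ∑ a, Complex.normSq (Z a) : ℝ) : ℂ) • (1 : Matrix (Fin n) (Fin n) ℂ))).PosDef := by
  set C : Matrix (Fin n × Fin n) (Fin n ⊕ Fin n) ℂ :=
    Matrix.of fun p q =>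
      Sum.elim (fun a => if p.1 = a then (starRingEnd ℂ) (W p.2) else 0)
               (fun b => if p.2 = b then (starRingEnd ℂ) (Z p.1) else 0) q with hC
  have key : (Matrix.fromBlocks
        (((1 + ∑ a, Complex.normSq (W a) : ℝ) : ℂ) • (1 : Matrix (Fin n) (Fin n) ℂ))
        (Matrix.of fun a b => (starRingEnd ℂ) (Z a) * W b)
        (Matrix.of fun a b => (starRingEnd ℂ) (W a) * Z b)
        (((1 + ∑ a, Complex.normSq (Z a) : ℝ) : ℂ) • (1 : Matrix (Fin n) (Fin n) ℂ)))
      = 1 + Cᴴ * C := by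
    ext p q
    rcases p with a | a <;> rcases q with b | b <;>
      simp only [hC, Matrix.fromBlocks_apply₁₁, Matrix.fromBlocks_apply₁₂,
        Matrix.fromBlocks_apply₂₁, Matrix.fromBlocks_apply₂₂, Matrix.add_apply,
        Matrix.mul_apply, Matrix.conjTranspose_apply, Matrix.of_apply, Sum.elim_inl,
        Sum.elim_inr, Fintype.sum_prod_type, Matrix.smul_apply, Matrix.one_apply,
        smul_eq_mul, star_zero, ite_mul, zero_mul,
        mul_ite, mul_zero, Finset.sum_ite_eq, Finset.sum_ite_eq', Finset.mem_univ,
        if_true, RingHom.id_apply, starRingEnd_self_apply, Matrix.one_apply]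
    case inl.inr | inr.inl =>
      simp [apply_ite, Finset.sum_ite_eq, Finset.sum_ite_eq',
        Complex.normSq_eq_conj_mul_self, Complex.ofReal_add, Complex.ofReal_sum,
        Matrix.one_apply, mul_comm, eq_comm]
    all_goals
      rcases eq_or_ne a b with h | h
      · subst h
        simp [Finset.sum_ite_eq, Complex.normSq_eq_conj_mul_self,
          Complex.ofReal_add, Complex.ofReal_sum, mul_comm, add_comm]
      · simp [h, (by simpa [eq_comm] using h : ¬ b = a)]
  rw [key]
  exact Matrix.PosDef.add_posSemidef Matrix.PosDef.one
    (Matrix.posSemidef_conjTranspose_mul_self C)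
end

section
/- Let G be the real symmetric 2n×2n matrix G = (1/(1−τ⁴))[(1+τ²)I_{2n} + [[(q−τ²)M, −qM],[−qM, (q−τ²)M]]] with |τ| < 1, q = 2τ²/(1−τ²)², M = E_nᵀE_n, and define g(v,w) = 2 Re(v̄ G wᵀ) for v, w ∈ ℂ^{2n}. Then for all z, z' ∈ ℂⁿ, g((z; −z̄), (z'; z̄')) = 0; i.e., the subspaces {(z; −z̄) : z ∈ ℂⁿ} and {(z; z̄) : z ∈ ℂⁿ} of ℂ^{2n} (viewed as a real vector space) are g-orthogonal. -/
open Matrix Complex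

noncomputable section

/-- The matrix `M = E_nᵀ E_n`, with a single 1 in the bottom-right entry. -/
def cornerM (n : ℕ) : Matrix (Fin (n + 1)) (Fin (n + 1)) ℝ :=
  Matrix.of fun i j => if i = Fin.last n ∧ j = Fin.last n then 1 else 0

/-- The matrix `G` representing the Stenzel Kähler metric at the base point. -/
def stenzelG (n : ℕ) (τ : ℝ) : Matrix (Fin (n + 1) ⊕ Fin (n + 1)) (Fin (n + 1) ⊕ Fin (n + 1)) ℝ :=
  (1 / (1 - τ ^ 4)) •
    ((1 + τ ^ 2) • (1 : Matrix (Fin (n + 1) ⊕ Fin (n + 1)) (Fin (n + 1) ⊕ Fin (n + 1)) ℝ)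
      + Matrix.fromBlocks
          ((2 * τ ^ 2 / (1 - τ ^ 2) ^ 2 - τ ^ 2) • cornerM n)
          (-(2 * τ ^ 2 / (1 - τ ^ 2) ^ 2) • cornerM n)
          (-(2 * τ ^ 2 / (1 - τ ^ 2) ^ 2) • cornerM n)
          ((2 * τ ^ 2 / (1 - τ ^ 2) ^ 2 - τ ^ 2) • cornerM n))

/-- `g(v,w) = 2 Re(v̄ G wᵀ)`. -/
def stenzelg (n : ℕ) (τ : ℝ) (v w : Fin (n + 1) ⊕ Fin (n + 1) → ℂ) : ℝ :=
  2 * (∑ i, ∑ j, (starRingEnd ℂ) (v i) * (stenzelG n τ i j : ℂ) * w j).re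

lemma stenzelG_swap (n : ℕ) (τ : ℝ) (i j : Fin (n + 1) ⊕ Fin (n + 1)) :
    stenzelG n τ i.swap j.swap = stenzelG n τ i j := by
  cases i <;> cases j <;>
    simp [stenzelG, Sum.swap, Matrix.one_apply, Sum.inl.injEq, Sum.inr.injEq]

/-- vertical vectors `(z; -z̄)` and horizontal vectors `(z'; z̄')`
are `g`-orthogonal. -/
theorem vertical_horizontal_g_orthogonal {n : ℕ} {τ : ℝ} (hτ : |τ| < 1)
    (z z' : Fin (n + 1) → ℂ) :
    stenzelg n τ (Sum.elim z fun i => -(starRingEnd ℂ) (z i))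
      (Sum.elim z' fun i => (starRingEnd ℂ) (z' i)) = 0 := by
  set v : Fin (n + 1) ⊕ Fin (n + 1) → ℂ := Sum.elim z fun i => -(starRingEnd ℂ) (z i) with hv
  set w : Fin (n + 1) ⊕ Fin (n + 1) → ℂ := Sum.elim z' fun i => (starRingEnd ℂ) (z' i) with hw
  set S : ℂ := ∑ i, ∑ j, (starRingEnd ℂ) (v i) * (stenzelG n τ i j : ℂ) * w j with hS
  have key : (starRingEnd ℂ) S = -S := by
    have hv' : ∀ i, (starRingEnd ℂ) (v i.swap) = -(v i) := by
      rintro (a | a) <;> simp [hv]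
    have hw' : ∀ j, w j.swap = (starRingEnd ℂ) (w j) := by
      rintro (a | a) <;> simp [hw]
    rw [hS, map_sum, ← Finset.sum_neg_distrib]
    refine Fintype.sum_equiv (Equiv.sumComm _ _) _ _ fun i => ?_
    rw [map_sum, ← Finset.sum_neg_distrib]
    refine Fintype.sum_equiv (Equiv.sumComm _ _) _ _ fun j => ?_
    have h1 := hv' i
    have h2 := hw' j
    simp only [Equiv.sumComm_apply, starRingEnd_apply, star_mul', Complex.conj_conj,
      Complex.conj_ofReal, stenzelG_swap, h1, h2, star_star]
    rw [← starRingEnd_apply, Complex.conj_ofReal]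
    ring
  have hre : S.re = 0 := by
    have := congrArg Complex.re key
    simp only [Complex.conj_re, Complex.neg_re] at this
    linarith
  have hfin : stenzelg n τ v w = 2 * S.re := rfl
  rw [hfin, hre, mul_zero]
end
end
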